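/- There exists a countably infinite-branching stochastic game with a reachability objective and a vertex v with value 1/2 at which neither player has a winning strategy for the constraint ≥ 1/2: player Box has no strategy σ with P_v^{σ,π}(Reach(T)) ≥ 1/2 for all π, and player Diamond has no strategy π with P_v^{σ,π}(Reach(T)) < 1/2 for all σ. -/

import Mathlib

open scoped Classical

/-- A stochastic game: a directed graph with a total edge relation, vertices
partitioned among player Box, player Diamond and probabilistic vertices,
the latter carrying a positive probability distribution on outgoing edges. -/
structure SGame (V : Type*) where
  edge : V → V → Prop
  total : ∀ v, ∃ u, edge v u
  isBox : V → Prop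
  isDiamond : V → Prop
  isCirc : V → Prop
  cover : ∀ v, isBox v ∨ isDiamond v ∨ isCirc v
  disjBD : ∀ v, ¬ (isBox v ∧ isDiamond v)
  disjBC : ∀ v, ¬ (isBox v ∧ isCirc v)
  disjDC : ∀ v, ¬ (isDiamond v ∧ isCirc v)
  prob : V → V → ℝ
  prob_nonneg : ∀ v u, 0 ≤ prob v u
  prob_supp : ∀ v u, isCirc v → (0 < prob v u ↔ edge v u)
  prob_sum : ∀ v, isCirc v → ∑' u, prob v u = 1

/-- A history-dependent randomized strategy for the player owning the vertices
satisfying `own`: it assigns to every history `w` and current vertex `v` owned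
by the player a probability distribution on the outgoing edges of `v`. -/
structure SGame.Strat {V : Type*} (G : SGame V) (own : V → Prop) where
  f : List V → V → V → ℝ
  nonneg : ∀ w v u, 0 ≤ f w v u
  supp : ∀ w v u, own v → f w v u ≠ 0 → G.edge v u
  sum_one : ∀ w v, own v → ∑' u, f w v u = 1

/-- One-step transition probability of the play `G(σ,π)` given history `w`. -/
noncomputable def SGame.step {V : Type*} (G : SGame V) (σ : G.Strat G.isBox)
    (π : G.Strat G.isDiamond) (w : List V) (v u : V) : ℝ :=
  if G.isBox v then σ.f w v u else if G.isDiamond v then π.f w v u else G.prob v u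

/-- Probability of reaching the target set `T` from `v` within at most `n`
transitions in the play `G(σ,π)`, given that history `w` has elapsed. -/
noncomputable def SGame.reachN {V : Type*} (G : SGame V) (σ : G.Strat G.isBox)
    (π : G.Strat G.isDiamond) (T : Set V) : ℕ → List V → V → ℝ
  | 0, _, v => if v ∈ T then 1 else 0
  | n+1, w, v => if v ∈ T then 1 else
      ∑' u, G.step σ π w v u * SGame.reachN G σ π T n (w ++ [v]) u

/-- Probability `P_v^{σ,π}(Reach(T))` of reaching `T` from `v` in the play `G(σ,π)`. -/
noncomputable def SGame.reachP {V : Type*} (G : SGame V) (σ : G.Strat G.isBox)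
    (π : G.Strat G.isDiamond) (T : Set V) (v : V) : ℝ :=
  ⨆ n, G.reachN σ π T n [] v

/-- The (lower) value `sup_σ inf_π P_v^{σ,π}(Reach(T))` of vertex `v`. -/
noncomputable def SGame.val {V : Type*} (G : SGame V) (T : Set V) (v : V) : ℝ :=
  ⨆ σ : G.Strat G.isBox, ⨅ π : G.Strat G.isDiamond, G.reachP σ π T v

/-- The Bellman operator on functions `V → [0,1]`. -/
noncomputable def SGame.bellman {V : Type*} (G : SGame V) (T : Set V)
    (f : V → ℝ) : V → ℝ := fun v =>
  if v ∈ T then 1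
  else if G.isBox v then sSup (f '' {u | G.edge v u})
  else if G.isDiamond v then sInf (f '' {u | G.edge v u})
  else ∑' u, G.prob v u * f u


namespace NDG

inductive GV : Type
  | start | boxv | diav | tgt | dead
  | av (m : ℕ) | bv (m : ℕ)
deriving DecidableEq

open GV

noncomputable def p (m : ℕ) : ℝ := (1/2 : ℝ) ^ (m + 1)

lemma p_pos (m : ℕ) : 0 < p m := by rw [p]; positivity

lemma p_lt_one (m : ℕ) : p m < 1 := by
  have : (1/2 : ℝ) ^ (m+1) < 1 ^ (m+1) := by
    apply pow_lt_pow_left₀ <;> norm_num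
  simpa [p] using this

lemma p_le_one (m : ℕ) : p m ≤ 1 := (p_lt_one m).le

lemma av_inj : Function.Injective GV.av := by
  intro a b h; cases h; rfl

lemma bv_inj : Function.Injective GV.bv := by
  intro a b h; cases h; rfl

lemma exists_p_lt {ε : ℝ} (hε : 0 < ε) : ∃ k, p k < ε := by
  obtain ⟨n, hn⟩ := exists_pow_lt_of_lt_one hε (by norm_num : (1/2 : ℝ) < 1)
  refine ⟨n, lt_trans ?_ hn⟩
  have h2 : (0:ℝ) < (1/2 : ℝ) ^ n := by positivity
  have : p n = (1/2:ℝ)^n * (1/2) := by rw [p, pow_succ]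
  rw [this]; nlinarith

def gedge : GV → GV → Prop
  | .start, u => u = boxv ∨ u = diav
  | .boxv, u => ∃ m, u = av m
  | .diav, u => ∃ m, u = bv m
  | .av _, u => u = tgt ∨ u = dead
  | .bv _, u => u = tgt ∨ u = dead
  | .tgt, u => u = tgt
  | .dead, u => u = dead

noncomputable def gprob : GV → GV → ℝ
  | .start, u => if u = boxv then 1/2 else if u = diav then 1/2 else 0
  | .boxv, _ => 0
  | .diav, _ => 0
  | .av m, u => if u = tgt then 1 - p m else if u = dead then p m else 0
  | .bv m, u => if u = tgt then p m else if u = dead then 1 - p m else 0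
  | .tgt, u => if u = tgt then 1 else 0
  | .dead, u => if u = dead then 1 else 0

lemma tsum_pair {f : GV → ℝ} (a b : GV) (hab : a ≠ b)
    (h : ∀ u, u ≠ a → u ≠ b → f u = 0) : ∑' u, f u = f a + f b := by
  rw [tsum_eq_sum (s := {a, b}) ?_]
  · rw [Finset.sum_pair hab]
  · intro u hu
    simp only [Finset.mem_insert, Finset.mem_singleton] at hu
    push_neg at hu
    exact h u hu.1 hu.2

noncomputable def Gm : SGame GV where
  edge := gedge
  total := by
    intro v
    cases v with
    | start => exact ⟨boxv, Or.inl rfl⟩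
    | boxv => exact ⟨av 0, 0, rfl⟩
    | diav => exact ⟨bv 0, 0, rfl⟩
    | av m => exact ⟨tgt, Or.inl rfl⟩
    | bv m => exact ⟨tgt, Or.inl rfl⟩
    | tgt => exact ⟨tgt, rfl⟩
    | dead => exact ⟨dead, rfl⟩
  isBox := fun v => v = boxv
  isDiamond := fun v => v = diav
  isCirc := fun v => v ≠ boxv ∧ v ≠ diav
  cover := by intro v; by_cases h1 : v = boxv; · exact Or.inl h1
              · by_cases h2 : v = diav; · exact Or.inr (Or.inl h2)
                · exact Or.inr (Or.inr ⟨h1, h2⟩)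
  disjBD := by rintro v ⟨h1, h2⟩; rw [h1] at h2; cases h2
  disjBC := by rintro v ⟨h1, h2⟩; exact h2.1 h1
  disjDC := by rintro v ⟨h1, h2⟩; exact h2.2 h1
  prob := gprob
  prob_nonneg := by
    intro v u
    cases v with
    | start => dsimp only [gprob]; split_ifs <;> norm_num
    | boxv => exact le_refl 0
    | diav => exact le_refl 0
    | av m =>
        dsimp only [gprob]; split_ifs
        · linarith [p_le_one m]
        · exact (p_pos m).le
        · norm_num
    | bv m =>
        dsimp only [gprob]; split_ifs
        · exact (p_pos m).le
        · linarith [p_le_one m]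
        · norm_num
    | tgt => dsimp only [gprob]; split_ifs <;> norm_num
    | dead => dsimp only [gprob]; split_ifs <;> norm_num
  prob_supp := by
    intro v u hc
    cases v with
    | boxv => exact absurd rfl hc.1
    | diav => exact absurd rfl hc.2
    | start =>
        show (0 < if u = boxv then (1/2:ℝ) else if u = diav then 1/2 else 0)
          ↔ (u = boxv ∨ u = diav)
        split_ifs with h1 h2
        · simp [h1]
        · simp [h2]
        · simp [h1, h2]
    | av m =>
        show (0 < if u = tgt then 1 - p m else if u = dead then p m else 0)
          ↔ (u = tgt ∨ u = dead)
        split_ifs with h1 h2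
        · simp only [h1, true_or, iff_true]; linarith [p_lt_one m]
        · simp only [h2, or_true, iff_true]; exact p_pos m
        · simp [h1, h2]
    | bv m =>
        show (0 < if u = tgt then p m else if u = dead then 1 - p m else 0)
          ↔ (u = tgt ∨ u = dead)
        split_ifs with h1 h2
        · simp only [h1, true_or, iff_true]; exact p_pos m
        · simp only [h2, or_true, iff_true]; linarith [p_lt_one m]
        · simp [h1, h2]
    | tgt =>
        show (0 < if u = tgt then (1:ℝ) else 0) ↔ (u = tgt)
        split_ifs with h1
        · simp [h1]
        · simp [h1]
    | dead =>
        show (0 < if u = dead then (1:ℝ) else 0) ↔ (u = dead)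
        split_ifs with h1
        · simp [h1]
        · simp [h1]
  prob_sum := by
    intro v hc
    cases v with
    | boxv => exact absurd rfl hc.1
    | diav => exact absurd rfl hc.2
    | start =>
        rw [tsum_pair boxv diav (fun h => nomatch h)
          (by intro u h1 h2; simp [gprob, h1, h2])]
        simp [gprob]; norm_num
    | av m =>
        rw [tsum_pair tgt dead (fun h => nomatch h)
          (by intro u h1 h2; simp [gprob, h1, h2])]
        simp [gprob]
    | bv m =>
        rw [tsum_pair tgt dead (fun h => nomatch h)
          (by intro u h1 h2; simp [gprob, h1, h2])]
        simp [gprob]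
    | tgt =>
        rw [tsum_eq_single tgt (by intro u h1; simp [gprob, h1])]
        simp [gprob]
    | dead =>
        rw [tsum_eq_single dead (by intro u h1; simp [gprob, h1])]
        simp [gprob]

def Tset : Set GV := {tgt}

lemma not_mem_T {v : GV} (h : v ≠ tgt) : v ∉ Tset := by
  simp [Tset]; exact h

section

variable (σ : Gm.Strat Gm.isBox) (π : Gm.Strat Gm.isDiamond)

lemma step_box (w : List GV) (u : GV) :
    Gm.step σ π w boxv u = σ.f w boxv u := by
  unfold SGame.step
  rw [if_pos (show Gm.isBox boxv from rfl)]

lemma step_dia (w : List GV) (u : GV) :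
    Gm.step σ π w diav u = π.f w diav u := by
  unfold SGame.step
  rw [if_neg (show ¬ Gm.isBox diav from fun h => nomatch h), if_pos (show Gm.isDiamond diav from rfl)]

lemma step_circ (w : List GV) (v u : GV) (h1 : v ≠ boxv) (h2 : v ≠ diav) :
    Gm.step σ π w v u = gprob v u := by
  unfold SGame.step
  rw [if_neg (show ¬ Gm.isBox v from h1), if_neg (show ¬ Gm.isDiamond v from h2)]
  rfl

lemma reachN_zero (w : List GV) (v : GV) :
    Gm.reachN σ π Tset 0 w v = if v ∈ Tset then 1 else 0 := rfl

lemma reachN_succ (n : ℕ) (w : List GV) (v : GV) :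
    Gm.reachN σ π Tset (n+1) w v = if v ∈ Tset then 1 else
      ∑' u, Gm.step σ π w v u * Gm.reachN σ π Tset n (w ++ [v]) u := rfl

lemma reach_tgt (n : ℕ) (w : List GV) : Gm.reachN σ π Tset n w tgt = 1 := by
  cases n with
  | zero => rw [reachN_zero, if_pos (by simp [Tset])]
  | succ n => rw [reachN_succ, if_pos (by simp [Tset])]

lemma reach_dead (n : ℕ) (w : List GV) : Gm.reachN σ π Tset n w dead = 0 := by
  induction n generalizing w with
  | zero => rw [reachN_zero, if_neg (not_mem_T (by simp))]
  | succ n ih =>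
      rw [reachN_succ, if_neg (not_mem_T (by simp))]
      rw [tsum_eq_single dead ?_]
      · rw [step_circ _ _ _ _ _ (by simp) (by simp)]
        rw [ih]; ring
      · intro u hu
        rw [step_circ _ _ _ _ _ (by simp) (by simp)]
        simp [gprob, hu]

lemma reach_av (n : ℕ) (w : List GV) (m : ℕ) :
    Gm.reachN σ π Tset (n+1) w (av m) = 1 - p m := by
  rw [reachN_succ, if_neg (not_mem_T (by simp))]
  rw [tsum_pair tgt dead (fun h => nomatch h) ?_]
  · rw [step_circ _ _ _ _ _ (by simp) (by simp),
        step_circ _ _ _ _ _ (by simp) (by simp),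
        reach_tgt, reach_dead]
    simp [gprob]
  · intro u h1 h2
    rw [step_circ _ _ _ _ _ (by simp) (by simp)]
    simp [gprob, h1, h2]

lemma reach_bv (n : ℕ) (w : List GV) (m : ℕ) :
    Gm.reachN σ π Tset (n+1) w (bv m) = p m := by
  rw [reachN_succ, if_neg (not_mem_T (by simp))]
  rw [tsum_pair tgt dead (fun h => nomatch h) ?_]
  · rw [step_circ _ _ _ _ _ (by simp) (by simp),
        step_circ _ _ _ _ _ (by simp) (by simp),
        reach_tgt, reach_dead]
    simp [gprob]
  · intro u h1 h2
    rw [step_circ _ _ _ _ _ (by simp) (by simp)]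
    simp [gprob, h1, h2]

lemma boxf_supp (w : List GV) (u : GV) (h : ∀ m, u ≠ av m) :
    σ.f w boxv u = 0 := by
  by_contra hne
  obtain ⟨m, hm⟩ := σ.supp w boxv u rfl hne
  exact h m hm

lemma diaf_supp (w : List GV) (u : GV) (h : ∀ m, u ≠ bv m) :
    π.f w diav u = 0 := by
  by_contra hne
  obtain ⟨m, hm⟩ := π.supp w diav u rfl hne
  exact h m hm

noncomputable def SB (w : List GV) : ℝ := ∑' m, σ.f w boxv (av m) * (1 - p m)

noncomputable def DB (w : List GV) : ℝ := ∑' m, π.f w diav (bv m) * p m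

lemma gsum (w : List GV) : ∑' m, σ.f w boxv (av m) = 1 := by
  rw [av_inj.tsum_eq (f := σ.f w boxv) ?_]
  · exact σ.sum_one w boxv rfl
  · intro u hu
    by_contra hr
    apply hu
    exact boxf_supp σ w u (fun m hm => hr ⟨m, hm.symm⟩)

lemma hsum (w : List GV) : ∑' m, π.f w diav (bv m) = 1 := by
  rw [bv_inj.tsum_eq (f := π.f w diav) ?_]
  · exact π.sum_one w diav rfl
  · intro u hu
    by_contra hr
    apply hu
    exact diaf_supp π w u (fun m hm => hr ⟨m, hm.symm⟩)

lemma g_summable (w : List GV) : Summable (fun m => σ.f w boxv (av m)) := by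
  by_contra hc
  have := gsum σ w
  rw [tsum_eq_zero_of_not_summable hc] at this
  norm_num at this

lemma h_summable (w : List GV) : Summable (fun m => π.f w diav (bv m)) := by
  by_contra hc
  have := hsum π w
  rw [tsum_eq_zero_of_not_summable hc] at this
  norm_num at this

lemma gS_summable (w : List GV) :
    Summable (fun m => σ.f w boxv (av m) * (1 - p m)) := by
  apply Summable.of_nonneg_of_le ?_ ?_ (g_summable σ w)
  · intro m; exact mul_nonneg (σ.nonneg _ _ _) (by linarith [p_le_one m])
  · intro m
    exact mul_le_of_le_one_right (σ.nonneg _ _ _) (by linarith [p_pos m])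

lemma gP_summable (w : List GV) :
    Summable (fun m => σ.f w boxv (av m) * p m) := by
  apply Summable.of_nonneg_of_le ?_ ?_ (g_summable σ w)
  · intro m; exact mul_nonneg (σ.nonneg _ _ _) (p_pos m).le
  · intro m
    exact mul_le_of_le_one_right (σ.nonneg _ _ _) (p_le_one m)

lemma hP_summable (w : List GV) :
    Summable (fun m => π.f w diav (bv m) * p m) := by
  apply Summable.of_nonneg_of_le ?_ ?_ (h_summable π w)
  · intro m; exact mul_nonneg (π.nonneg _ _ _) (p_pos m).le
  · intro m
    exact mul_le_of_le_one_right (π.nonneg _ _ _) (p_le_one m)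

lemma SB_nonneg (w : List GV) : 0 ≤ SB σ w :=
  tsum_nonneg fun m => mul_nonneg (σ.nonneg _ _ _) (by linarith [p_le_one m])

lemma DB_nonneg (w : List GV) : 0 ≤ DB π w :=
  tsum_nonneg fun m => mul_nonneg (π.nonneg _ _ _) (p_pos m).le

lemma SB_le_one (w : List GV) : SB σ w ≤ 1 := by
  have h := Summable.tsum_le_tsum
    (fun m => mul_le_of_le_one_right (σ.nonneg w boxv (av m)) (by linarith [p_pos m]))
    (gS_summable σ w) (g_summable σ w)
  rw [gsum σ w] at h
  exact h

lemma exists_pos_of_sum_one {g : ℕ → ℝ} (hg : ∀ m, 0 ≤ g m)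
    (h1 : ∑' m, g m = 1) : ∃ m, 0 < g m := by
  by_contra hc
  push_neg at hc
  have hz : ∀ m, g m = 0 := fun m => le_antisymm (hc m) (hg m)
  have : ∑' m, g m = 0 := by simp [hz]
  rw [this] at h1; norm_num at h1

lemma SB_lt_one (w : List GV) : SB σ w < 1 := by
  have key : 1 - SB σ w = ∑' m, σ.f w boxv (av m) * p m := by
    have hsub : ∑' m, (σ.f w boxv (av m) - σ.f w boxv (av m) * (1 - p m))
        = ∑' m, σ.f w boxv (av m) - ∑' m, σ.f w boxv (av m) * (1 - p m) :=
      Summable.tsum_sub (g_summable σ w) (gS_summable σ w)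
    rw [gsum σ w] at hsub
    rw [SB, ← hsub]
    apply tsum_congr; intro m; ring
  obtain ⟨m0, hm0⟩ := exists_pos_of_sum_one (fun m => σ.nonneg w boxv (av m)) (gsum σ w)
  have h1 : σ.f w boxv (av m0) * p m0 ≤ ∑' m, σ.f w boxv (av m) * p m :=
    Summable.le_tsum (gP_summable σ w) m0
      (fun j _ => mul_nonneg (σ.nonneg _ _ _) (p_pos j).le)
  have h2 : 0 < σ.f w boxv (av m0) * p m0 := mul_pos hm0 (p_pos m0)
  linarith

lemma DB_pos (w : List GV) : 0 < DB π w := by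
  obtain ⟨m0, hm0⟩ := exists_pos_of_sum_one (fun m => π.nonneg w diav (bv m)) (hsum π w)
  have h1 : π.f w diav (bv m0) * p m0 ≤ DB π w :=
    Summable.le_tsum (hP_summable π w) m0
      (fun j _ => mul_nonneg (π.nonneg _ _ _) (p_pos j).le)
  have h2 : 0 < π.f w diav (bv m0) * p m0 := mul_pos hm0 (p_pos m0)
  linarith

lemma reach_box (n : ℕ) (w : List GV) :
    Gm.reachN σ π Tset (n+2) w boxv = SB σ w := by
  rw [reachN_succ, if_neg (not_mem_T (by simp))]
  rw [← av_inj.tsum_eq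
    (f := fun u => Gm.step σ π w boxv u * Gm.reachN σ π Tset (n+1) (w ++ [boxv]) u) ?_]
  · apply tsum_congr
    intro m
    rw [step_box, reach_av]
  · intro u hu
    by_contra hr
    apply hu
    show Gm.step σ π w boxv u * Gm.reachN σ π Tset (n+1) (w ++ [boxv]) u = 0
    rw [step_box, boxf_supp σ w u (fun m hm => hr ⟨m, hm.symm⟩)]
    ring

lemma reach_dia (n : ℕ) (w : List GV) :
    Gm.reachN σ π Tset (n+2) w diav = DB π w := by
  rw [reachN_succ, if_neg (not_mem_T (by simp))]
  rw [← bv_inj.tsum_eq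
    (f := fun u => Gm.step σ π w diav u * Gm.reachN σ π Tset (n+1) (w ++ [diav]) u) ?_]
  · apply tsum_congr
    intro m
    rw [step_dia, reach_bv]
  · intro u hu
    by_contra hr
    apply hu
    show Gm.step σ π w diav u * Gm.reachN σ π Tset (n+1) (w ++ [diav]) u = 0
    rw [step_dia, diaf_supp π w u (fun m hm => hr ⟨m, hm.symm⟩)]
    ring

lemma reach_box1 (w : List GV) : Gm.reachN σ π Tset 1 w boxv = 0 := by
  rw [reachN_succ, if_neg (not_mem_T (by simp))]
  have hz : ∀ u, Gm.step σ π w boxv u * Gm.reachN σ π Tset 0 (w ++ [boxv]) u = 0 := by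
    intro u
    cases u with
    | av m => rw [reachN_zero, if_neg (not_mem_T (by simp))]; ring
    | start => rw [step_box, boxf_supp σ w _ (by intro m h; cases h)]; ring
    | boxv => rw [step_box, boxf_supp σ w _ (by intro m h; cases h)]; ring
    | diav => rw [step_box, boxf_supp σ w _ (by intro m h; cases h)]; ring
    | tgt => rw [step_box, boxf_supp σ w _ (by intro m h; cases h)]; ring
    | dead => rw [step_box, boxf_supp σ w _ (by intro m h; cases h)]; ring
    | bv m => rw [step_box, boxf_supp σ w _ (by intro k h; cases h)]; ring
  calc ∑' u, Gm.step σ π w boxv u * Gm.reachN σ π Tset 0 (w ++ [boxv]) u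
      = ∑' _u : GV, (0:ℝ) := tsum_congr hz
    _ = 0 := tsum_zero

lemma reach_dia1 (w : List GV) : Gm.reachN σ π Tset 1 w diav = 0 := by
  rw [reachN_succ, if_neg (not_mem_T (by simp))]
  have hz : ∀ u, Gm.step σ π w diav u * Gm.reachN σ π Tset 0 (w ++ [diav]) u = 0 := by
    intro u
    cases u with
    | bv m => rw [reachN_zero, if_neg (not_mem_T (by simp))]; ring
    | start => rw [step_dia, diaf_supp π w _ (by intro m h; cases h)]; ring
    | boxv => rw [step_dia, diaf_supp π w _ (by intro m h; cases h)]; ring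
    | diav => rw [step_dia, diaf_supp π w _ (by intro m h; cases h)]; ring
    | tgt => rw [step_dia, diaf_supp π w _ (by intro m h; cases h)]; ring
    | dead => rw [step_dia, diaf_supp π w _ (by intro m h; cases h)]; ring
    | av m => rw [step_dia, diaf_supp π w _ (by intro k h; cases h)]; ring
  calc ∑' u, Gm.step σ π w diav u * Gm.reachN σ π Tset 0 (w ++ [diav]) u
      = ∑' _u : GV, (0:ℝ) := tsum_congr hz
    _ = 0 := tsum_zero

lemma reach_start (n : ℕ) :
    Gm.reachN σ π Tset (n+3) [] start = (SB σ [start] + DB π [start]) / 2 := by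
  rw [reachN_succ, if_neg (not_mem_T (by simp))]
  have happ : ([] : List GV) ++ [start] = [start] := rfl
  rw [happ]
  rw [tsum_pair boxv diav (fun h => nomatch h) ?_]
  · rw [step_circ _ _ _ _ _ (by simp) (by simp),
        step_circ _ _ _ _ _ (by simp) (by simp)]
    show gprob start boxv * Gm.reachN σ π Tset (n+2) [start] boxv
        + gprob start diav * Gm.reachN σ π Tset (n+2) [start] diav = _
    rw [reach_box, reach_dia]
    simp [gprob]
    ring
  · intro u h1 h2
    rw [step_circ _ _ _ _ _ (by simp) (by simp)]
    simp [gprob, h1, h2]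

lemma reach_start_le (n : ℕ) :
    Gm.reachN σ π Tset n [] start ≤ (SB σ [start] + DB π [start]) / 2 := by
  have hc : 0 ≤ (SB σ [start] + DB π [start]) / 2 := by
    have := SB_nonneg σ [start]
    have := DB_nonneg π [start]
    linarith
  have happ : ([] : List GV) ++ [start] = [start] := rfl
  match n with
  | 0 =>
      rw [reachN_zero, if_neg (not_mem_T (by simp))]
      exact hc
  | 1 =>
      rw [reachN_succ, if_neg (not_mem_T (by simp)), happ]
      have : ∑' u, Gm.step σ π [] start u * Gm.reachN σ π Tset 0 [start] u = 0 := by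
        rw [tsum_pair boxv diav (fun h => nomatch h) ?_]
        · rw [reachN_zero, if_neg (not_mem_T (by simp)),
              reachN_zero, if_neg (not_mem_T (by simp))]
          ring
        · intro u h1 h2
          rw [step_circ _ _ _ _ _ (by simp) (by simp)]
          simp [gprob, h1, h2]
      rw [this]; exact hc
  | 2 =>
      rw [reachN_succ, if_neg (not_mem_T (by simp)), happ]
      have : ∑' u, Gm.step σ π [] start u * Gm.reachN σ π Tset 1 [start] u = 0 := by
        rw [tsum_pair boxv diav (fun h => nomatch h) ?_]
        · rw [reach_box1, reach_dia1]; ring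
        · intro u h1 h2
          rw [step_circ _ _ _ _ _ (by simp) (by simp)]
          simp [gprob, h1, h2]
      rw [this]; exact hc
  | (k+3) => exact (reach_start σ π k).le

lemma reachP_eq :
    Gm.reachP σ π Tset start = (SB σ [start] + DB π [start]) / 2 := by
  unfold SGame.reachP
  apply le_antisymm
  · exact ciSup_le (reach_start_le σ π)
  · have hb : BddAbove (Set.range fun n => Gm.reachN σ π Tset n [] start) := by
      refine ⟨(SB σ [start] + DB π [start]) / 2, ?_⟩
      rintro x ⟨n, rfl⟩
      exact reach_start_le σ π n
    have h3 := le_ciSup hb 3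
    rwa [show Gm.reachN σ π Tset 3 [] start = (SB σ [start] + DB π [start]) / 2
      from reach_start σ π 0] at h3

end

noncomputable def pureB (k : ℕ) : Gm.Strat Gm.isBox where
  f := fun _ _ u => if u = av k then 1 else 0
  nonneg := by intro w v u; split <;> norm_num
  supp := by
    intro w v u hv hne
    have hv' : v = boxv := hv
    subst hv'
    split at hne
    · next h => subst h; exact ⟨k, rfl⟩
    · exact absurd rfl hne
  sum_one := by intro w v _; exact tsum_ite_eq (av k) 1

noncomputable def pureD (k : ℕ) : Gm.Strat Gm.isDiamond where
  f := fun _ _ u => if u = bv k then 1 else 0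
  nonneg := by intro w v u; split <;> norm_num
  supp := by
    intro w v u hv hne
    have hv' : v = diav := hv
    subst hv'
    split at hne
    · next h => subst h; exact ⟨k, rfl⟩
    · exact absurd rfl hne
  sum_one := by intro w v _; exact tsum_ite_eq (bv k) 1

instance : Nonempty (Gm.Strat Gm.isBox) := ⟨pureB 0⟩
instance : Nonempty (Gm.Strat Gm.isDiamond) := ⟨pureD 0⟩

lemma SB_pure (k : ℕ) (w : List GV) : SB (pureB k) w = 1 - p k := by
  rw [SB]
  rw [show (fun m => (pureB k).f w boxv (av m) * (1 - p m))
      = fun m => if m = k then 1 - p k else 0 from ?_]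
  · exact tsum_ite_eq k (fun _ => 1 - p k)
  · funext m
    by_cases h : m = k
    · subst h; simp [pureB]
    · have : av m ≠ av k := fun he => h (av_inj he)
      simp [pureB, this, h]

lemma DB_pure (k : ℕ) (w : List GV) : DB (pureD k) w = p k := by
  rw [DB]
  rw [show (fun m => (pureD k).f w diav (bv m) * p m)
      = fun m => if m = k then p k else 0 from ?_]
  · exact tsum_ite_eq k (fun _ => p k)
  · funext m
    by_cases h : m = k
    · subst h; simp [pureD]
    · have : bv m ≠ bv k := fun he => h (bv_inj he)
      simp [pureD, this, h]

instance : Countable GV := by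
  have : Function.Injective (fun v : GV => match v with
    | GV.start => ((0, 0) : ℕ × ℕ)
    | GV.boxv => (1, 0)
    | GV.diav => (2, 0)
    | GV.tgt => (3, 0)
    | GV.dead => (4, 0)
    | GV.av m => (5, m)
    | GV.bv m => (6, m)) := by
    intro a b h
    cases a <;> cases b <;> simp_all [Prod.ext_iff]
  exact this.countable

lemma val_eq : Gm.val Tset start = 1/2 := by
  unfold SGame.val
  have h1 : ∀ σ : Gm.Strat Gm.isBox,
      (⨅ π : Gm.Strat Gm.isDiamond, Gm.reachP σ π Tset start) = SB σ [start] / 2 := by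
    intro σ
    apply le_antisymm
    · apply le_of_forall_pos_le_add
      intro ε hε
      obtain ⟨k, hk⟩ := exists_p_lt (show (0:ℝ) < 2*ε by linarith)
      have hbdd : BddBelow (Set.range fun π : Gm.Strat Gm.isDiamond =>
          Gm.reachP σ π Tset start) := by
        refine ⟨0, ?_⟩
        rintro x ⟨π, rfl⟩
        try dsimp only
        rw [reachP_eq]
        have := SB_nonneg σ [start]
        have := DB_nonneg π [start]
        linarith
      have hle := ciInf_le hbdd (pureD k)
      try dsimp only at hle
      rw [reachP_eq, DB_pure] at hle
      linarith
    · apply le_ciInf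
      intro π
      try dsimp only
      rw [reachP_eq]
      have := DB_nonneg π [start]
      linarith
  simp only [h1]
  apply le_antisymm
  · apply ciSup_le
    intro σ
    try dsimp only
    have := SB_le_one σ [start]
    linarith
  · apply le_of_forall_pos_le_add
    intro ε hε
    obtain ⟨k, hk⟩ := exists_p_lt (show (0:ℝ) < 2*ε by linarith)
    have hbdd : BddAbove (Set.range fun σ : Gm.Strat Gm.isBox => SB σ [start] / 2) := by
      refine ⟨1/2, ?_⟩
      rintro x ⟨σ, rfl⟩
      have := SB_le_one σ [start]
      try dsimp only
      linarith
    have hle := le_ciSup hbdd (pureB k)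
    try dsimp only at hle
    rw [SB_pure] at hle
    linarith

lemma infsup_eq :
    (⨅ π : Gm.Strat Gm.isDiamond, ⨆ σ : Gm.Strat Gm.isBox,
      Gm.reachP σ π Tset start) = 1/2 := by
  have h2 : ∀ π : Gm.Strat Gm.isDiamond,
      (⨆ σ : Gm.Strat Gm.isBox, Gm.reachP σ π Tset start)
        = (1 + DB π [start]) / 2 := by
    intro π
    apply le_antisymm
    · apply ciSup_le
      intro σ
      try dsimp only
      rw [reachP_eq]
      have := SB_le_one σ [start]
      linarith
    · apply le_of_forall_pos_le_add
      intro ε hε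
      obtain ⟨k, hk⟩ := exists_p_lt (show (0:ℝ) < 2*ε by linarith)
      have hbdd : BddAbove (Set.range fun σ : Gm.Strat Gm.isBox =>
          Gm.reachP σ π Tset start) := by
        refine ⟨(1 + DB π [start]) / 2, ?_⟩
        rintro x ⟨σ, rfl⟩
        try dsimp only
        rw [reachP_eq]
        have := SB_le_one σ [start]
        linarith
      have hle := le_ciSup hbdd (pureB k)
      try dsimp only at hle
      rw [reachP_eq, SB_pure] at hle
      linarith
  simp only [h2]
  apply le_antisymm
  · apply le_of_forall_pos_le_add
    intro ε hε
    obtain ⟨k, hk⟩ := exists_p_lt (show (0:ℝ) < 2*ε by linarith)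
    have hbdd : BddBelow (Set.range fun π : Gm.Strat Gm.isDiamond =>
        (1 + DB π [start]) / 2) := by
      refine ⟨1/2, ?_⟩
      rintro x ⟨π, rfl⟩
      have := DB_nonneg π [start]
      try dsimp only
      linarith
    have hle := ciInf_le hbdd (pureD k)
    try dsimp only at hle
    rw [DB_pure] at hle
    linarith
  · apply le_ciInf
    intro π
    try dsimp only
    have := DB_nonneg π [start]
    linarith

lemma no_box_win :
    ¬ ∃ σ : Gm.Strat Gm.isBox, ∀ π : Gm.Strat Gm.isDiamond,
      (1:ℝ)/2 ≤ Gm.reachP σ π Tset start := by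
  rintro ⟨σ, h⟩
  have hS := SB_lt_one σ [start]
  obtain ⟨k, hk⟩ := exists_p_lt (show (0:ℝ) < 1 - SB σ [start] by linarith)
  have := h (pureD k)
  rw [reachP_eq, DB_pure] at this
  linarith

lemma no_dia_win :
    ¬ ∃ π : Gm.Strat Gm.isDiamond, ∀ σ : Gm.Strat Gm.isBox,
      Gm.reachP σ π Tset start < 1/2 := by
  rintro ⟨π, h⟩
  have hD := DB_pos π [start]
  obtain ⟨k, hk⟩ := exists_p_lt hD
  have := h (pureB k)
  rw [reachP_eq, SB_pure] at this
  linarith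

lemma branching : ¬ {u | Gm.edge boxv u}.Finite := by
  have he : {u | Gm.edge boxv u} = Set.range GV.av := by
    ext u
    constructor
    · rintro ⟨m, rfl⟩; exact ⟨m, rfl⟩
    · rintro ⟨m, rfl⟩; exact ⟨m, rfl⟩
  rw [he]
  exact Set.infinite_range_of_injective av_inj

end NDG


/-- There is a countably infinite-branching stochastic game with a
reachability objective and a vertex of value `1/2` where neither player has a
winning strategy for the constraint `≥ 1/2`. -/
theorem exists_nondetermined_game :
    ∃ (V : Type) (G : SGame V) (T : Set V) (v : V),
      Countable V ∧ (∃ v0 : V, ¬ {u | G.edge v0 u}.Finite) ∧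
      G.val T v = 1 / 2 ∧
      (⨅ π : G.Strat G.isDiamond, ⨆ σ : G.Strat G.isBox, G.reachP σ π T v) = 1 / 2 ∧
      (¬ ∃ σ : G.Strat G.isBox, ∀ π : G.Strat G.isDiamond,
          (1:ℝ)/2 ≤ G.reachP σ π T v) ∧
      (¬ ∃ π : G.Strat G.isDiamond, ∀ σ : G.Strat G.isBox,
          G.reachP σ π T v < 1/2) := by
  exact ⟨NDG.GV, NDG.Gm, NDG.Tset, NDG.GV.start, inferInstance,
    ⟨NDG.GV.boxv, NDG.branching⟩, NDG.val_eq, NDG.infsup_eq,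
    NDG.no_box_win, NDG.no_dia_win⟩
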